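/- Let H1 and H2 be infinite-dimensional complex Hilbert spaces. Then there exist a bounded bilinear form m : S_2(H1) × S_2(H2) → ℂ, sequences (S_i), (S̃_j) in the closed unit ball of S_2(H1), and sequences (T_i), (T̃_j) in the closed unit ball of S_2(H2) such that lim_i lim_j m(S_i S̃_j, T_i T̃_j) = 0 while lim_j lim_i m(S_i S̃_j, T_i T̃_j) = 1. In particular, there exists a bounded bilinear form on S_2(H1) × S_2(H2) that is not biregular. -/

import Mathlib

open Filter Topology
open scoped Classical

noncomputable section

variable (H : Type) [NormedAddCommGroup H] [InnerProductSpace ℂ H] [CompleteSpace H]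

/-- The index set of a fixed Hilbert basis of `H`. -/
def hsIdx : Set H := (exists_hilbertBasis ℂ H).choose

/-- A fixed Hilbert basis of `H`. -/
def hsBasis : HilbertBasis (hsIdx H) ℂ H := (exists_hilbertBasis ℂ H).choose_spec.choose

variable {H}

/-- `T` is a Hilbert–Schmidt operator, i.e. `T ∈ S_2(H)`. -/
def IsHS (T : H →L[ℂ] H) : Prop := Summable fun i => ‖T (hsBasis H i)‖ ^ 2

/-- The Hilbert–Schmidt norm `‖T‖₂ = (Tr (T* T))^(1/2)`. -/
def hsNorm (T : H →L[ℂ] H) : ℝ := Real.sqrt (∑' i, ‖T (hsBasis H i)‖ ^ 2)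

lemma hsNorm_nonneg (T : H →L[ℂ] H) : 0 ≤ hsNorm T := Real.sqrt_nonneg _

/-- The Hilbert–Schmidt inner product `⟨S, T⟩ = Tr (T* S)` (linear in `S`,
conjugate-linear in `T`). -/
def hsInner (S T : H →L[ℂ] H) : ℂ := ∑' i, inner ℂ (T (hsBasis H i)) (S (hsBasis H i))

lemma hsIdx_infinite (h : ¬ FiniteDimensional ℂ H) : Infinite (hsIdx H) := by
  rw [Set.infinite_coe_iff]
  by_contra hfin
  rw [Set.not_infinite] at hfin
  apply h
  haveI : Finite (hsIdx H) := hfin.to_subtype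
  have hr : Set.Finite (Set.range ⇑(hsBasis H)) := Set.finite_range _
  haveI : FiniteDimensional ℂ (Submodule.span ℂ (Set.range ⇑(hsBasis H))) :=
    FiniteDimensional.span_of_finite ℂ hr
  have hclosed : IsClosed ((Submodule.span ℂ (Set.range ⇑(hsBasis H))) : Set H) :=
    Submodule.closed_of_finiteDimensional _
  have htop : Submodule.span ℂ (Set.range ⇑(hsBasis H)) = ⊤ := by
    rw [← (hsBasis H).dense_span, hclosed.submodule_topologicalClosure_eq]
  rw [htop] at this
  exact (Submodule.topEquiv (R := ℂ) (M := H)).finiteDimensional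

-- rank one operators
def rk (k : hsIdx H) (y : H) : H →L[ℂ] H := (innerSL ℂ ((hsBasis H) k)).smulRight y

lemma rk_apply (k : hsIdx H) (y x : H) : rk k y x = (inner ℂ ((hsBasis H) k) x : ℂ) • y := rfl

lemma rk_apply_basis (k i : hsIdx H) (y : H) :
    rk k y (hsBasis H i) = if k = i then y else 0 := by
  rw [rk_apply, orthonormal_iff_ite.mp (hsBasis H).orthonormal]
  split <;> simp

lemma isHS_rk (k : hsIdx H) (y : H) : IsHS (rk k y) := by
  have : (fun i : hsIdx H => ‖rk k y (hsBasis H i)‖ ^ 2)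
      = fun i => if i = k then ‖y‖ ^ 2 else 0 := by
    funext i
    rw [rk_apply_basis]
    by_cases h : k = i
    · simp [h]
    · simp [h, Ne.symm h]
  rw [IsHS, this]
  exact summable_of_ne_finset_zero (s := {k}) (by intro i hi; simp at hi; simp [hi])

lemma hsNorm_rk (k : hsIdx H) (y : H) : hsNorm (rk k y) = ‖y‖ := by
  have : (fun i : hsIdx H => ‖rk k y (hsBasis H i)‖ ^ 2)
      = fun i => if i = k then ‖y‖ ^ 2 else 0 := by
    funext i
    rw [rk_apply_basis]
    by_cases h : k = i
    · simp [h]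
    · simp [h, Ne.symm h]
  rw [hsNorm, this, tsum_eq_single k (by intro i hi; simp [hi])]
  simp [Real.sqrt_sq (norm_nonneg y)]

lemma rk_comp (k l : hsIdx H) (y : H) : rk k y ∘L rk l (hsBasis H k) = rk l y := by
  have h1 : (inner ℂ ((hsBasis H) k) ((hsBasis H) k) : ℂ) = 1 := by
    simpa using orthonormal_iff_ite.mp (hsBasis H).orthonormal k k
  ext x
  simp [rk_apply, inner_smul_right, h1, smul_smul, (hsBasis H).orthonormal.1 k]

-- Bessel-type bound
lemma sq_summable {u : ℕ → hsIdx H} (hu : Function.Injective u)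
    {S : H →L[ℂ] H} (hS : IsHS S) :
    Summable (fun p : ℕ × ℕ =>
      ‖(inner ℂ (hsBasis H (u p.2)) (S (hsBasis H (u p.1))) : ℂ)‖ ^ 2) ∧
    ∑' p : ℕ × ℕ, ‖(inner ℂ (hsBasis H (u p.2)) (S (hsBasis H (u p.1))) : ℂ)‖ ^ 2
      ≤ hsNorm S ^ 2 := by
  have horth : Orthonormal ℂ (fun n => hsBasis H (u n)) :=
    (hsBasis H).orthonormal.comp u hu
  have hrow : ∀ n : ℕ, Summable fun m : ℕ =>
      ‖(inner ℂ (hsBasis H (u m)) (S (hsBasis H (u n))) : ℂ)‖ ^ 2 :=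
    fun n => horth.inner_products_summable _
  have hrowle : ∀ n : ℕ, ∑' m : ℕ,
      ‖(inner ℂ (hsBasis H (u m)) (S (hsBasis H (u n))) : ℂ)‖ ^ 2 ≤ ‖S (hsBasis H (u n))‖ ^ 2 :=
    fun n => horth.tsum_inner_products_le _
  have hcol : Summable fun n : ℕ => ‖S (hsBasis H (u n))‖ ^ 2 := hS.comp_injective hu
  have hrows : Summable fun n : ℕ => ∑' m : ℕ,
      ‖(inner ℂ (hsBasis H (u m)) (S (hsBasis H (u n))) : ℂ)‖ ^ 2 :=
    Summable.of_nonneg_of_le (fun n => tsum_nonneg fun m => by positivity)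
      hrowle hcol
  have hsum : Summable (fun p : ℕ × ℕ =>
      ‖(inner ℂ (hsBasis H (u p.2)) (S (hsBasis H (u p.1))) : ℂ)‖ ^ 2) :=
    by
      rw [summable_prod_of_nonneg (fun p => by positivity)]
      exact ⟨fun n => hrow n, hrows⟩
  refine ⟨hsum, ?_⟩
  rw [Summable.tsum_prod' hsum (fun n => hrow n)]
  have h1 : ∑' n : ℕ, ∑' m : ℕ,
      ‖(inner ℂ (hsBasis H (u m)) (S (hsBasis H (u n))) : ℂ)‖ ^ 2
      ≤ ∑' n : ℕ, ‖S (hsBasis H (u n))‖ ^ 2 := Summable.tsum_le_tsum hrowle hrows hcol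
  have h2 : ∑' n : ℕ, ‖S (hsBasis H (u n))‖ ^ 2 ≤ ∑' i, ‖S (hsBasis H i)‖ ^ 2 :=
    Summable.tsum_le_tsum_of_inj u hu (fun i _ => by positivity) (fun n => le_rfl) hcol hS
  have h3 : ∑' i, ‖S (hsBasis H i)‖ ^ 2 = hsNorm S ^ 2 := by
    rw [hsNorm, Real.sq_sqrt (tsum_nonneg fun i => by positivity)]
  linarith

-- Cauchy-Schwarz for tsum
lemma summable_mul_of_sq {ι : Type*} {f g : ι → ℝ} (hf : ∀ i, 0 ≤ f i) (hg : ∀ i, 0 ≤ g i)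
    (hf2 : Summable fun i => f i ^ 2) (hg2 : Summable fun i => g i ^ 2) :
    Summable fun i => f i * g i := by
  refine Summable.of_nonneg_of_le (fun i => mul_nonneg (hf i) (hg i)) (fun i => ?_)
    ((hf2.add hg2).mul_left (1 / 2))
  have := sq_nonneg (f i - g i)
  nlinarith

lemma tsum_mul_le_sqrt {ι : Type*} {f g : ι → ℝ} (hf : ∀ i, 0 ≤ f i) (hg : ∀ i, 0 ≤ g i)
    (hf2 : Summable fun i => f i ^ 2) (hg2 : Summable fun i => g i ^ 2) :
    ∑' i, f i * g i ≤ Real.sqrt (∑' i, f i ^ 2) * Real.sqrt (∑' i, g i ^ 2) := by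
  refine Summable.tsum_le_of_sum_le (summable_mul_of_sq hf hg hf2 hg2) (fun s => ?_)
  calc ∑ i ∈ s, f i * g i
      ≤ Real.sqrt (∑ i ∈ s, f i ^ 2) * Real.sqrt (∑ i ∈ s, g i ^ 2) :=
        Real.sum_mul_le_sqrt_mul_sqrt s f g
    _ ≤ Real.sqrt (∑' i, f i ^ 2) * Real.sqrt (∑' i, g i ^ 2) :=
        mul_le_mul (Real.sqrt_le_sqrt (Summable.sum_le_tsum s (fun i _ => by positivity) hf2))
          (Real.sqrt_le_sqrt (Summable.sum_le_tsum s (fun i _ => by positivity) hg2))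
          (Real.sqrt_nonneg _) (Real.sqrt_nonneg _)


variable {H₁ H₂ : Type} [NormedAddCommGroup H₁] [InnerProductSpace ℂ H₁] [CompleteSpace H₁]
  [NormedAddCommGroup H₂] [InnerProductSpace ℂ H₂] [CompleteSpace H₂]

/-- `m` is a bounded bilinear form on `S_2(H₁) × S_2(H₂)`. -/
structure IsHSBilinearForm (m : (H₁ →L[ℂ] H₁) → (H₂ →L[ℂ] H₂) → ℂ) : Prop where
  add_left : ∀ S S' T, IsHS S → IsHS S' → IsHS T → m (S + S') T = m S T + m S' T
  smul_left : ∀ (c : ℂ) S T, IsHS S → IsHS T → m (c • S) T = c * m S T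
  add_right : ∀ S T T', IsHS S → IsHS T → IsHS T' → m S (T + T') = m S T + m S T'
  smul_right : ∀ (c : ℂ) S T, IsHS S → IsHS T → m S (c • T) = c * m S T
  bound : ∃ C : ℝ, ∀ S T, IsHS S → IsHS T → ‖m S T‖ ≤ C * hsNorm S * hsNorm T

def mTerm (u : ℕ → hsIdx H₁) (v : ℕ → hsIdx H₂) (S : H₁ →L[ℂ] H₁) (T : H₂ →L[ℂ] H₂)
    (p : ℕ × ℕ) : ℂ :=
  (if p.1 ≤ p.2 then 1 else 0) *
    ((inner ℂ (hsBasis H₁ (u p.2)) (S (hsBasis H₁ (u p.1))) : ℂ) *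
     (inner ℂ (hsBasis H₂ (v p.2)) (T (hsBasis H₂ (v p.1))) : ℂ))

def mForm (u : ℕ → hsIdx H₁) (v : ℕ → hsIdx H₂) (S : H₁ →L[ℂ] H₁) (T : H₂ →L[ℂ] H₂) : ℂ :=
  ∑' p : ℕ × ℕ, mTerm u v S T p

lemma mTerm_norm_le (u : ℕ → hsIdx H₁) (v : ℕ → hsIdx H₂) (S : H₁ →L[ℂ] H₁)
    (T : H₂ →L[ℂ] H₂) (p : ℕ × ℕ) :
    ‖mTerm u v S T p‖ ≤
      ‖(inner ℂ (hsBasis H₁ (u p.2)) (S (hsBasis H₁ (u p.1))) : ℂ)‖ *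
      ‖(inner ℂ (hsBasis H₂ (v p.2)) (T (hsBasis H₂ (v p.1))) : ℂ)‖ := by
  rw [mTerm, norm_mul, norm_mul]
  have : ‖(if p.1 ≤ p.2 then (1:ℂ) else 0)‖ ≤ 1 := by split <;> simp
  calc ‖(if p.1 ≤ p.2 then (1:ℂ) else 0)‖ *
      (‖(inner ℂ (hsBasis H₁ (u p.2)) (S (hsBasis H₁ (u p.1))) : ℂ)‖ *
       ‖(inner ℂ (hsBasis H₂ (v p.2)) (T (hsBasis H₂ (v p.1))) : ℂ)‖)
      ≤ 1 * (‖(inner ℂ (hsBasis H₁ (u p.2)) (S (hsBasis H₁ (u p.1))) : ℂ)‖ *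
       ‖(inner ℂ (hsBasis H₂ (v p.2)) (T (hsBasis H₂ (v p.1))) : ℂ)‖) :=
      mul_le_mul_of_nonneg_right this (mul_nonneg (norm_nonneg _) (norm_nonneg _))
    _ = _ := one_mul _

lemma mTerm_summable_norm {u : ℕ → hsIdx H₁} {v : ℕ → hsIdx H₂} (hu : Function.Injective u)
    (hv : Function.Injective v) {S : H₁ →L[ℂ] H₁} {T : H₂ →L[ℂ] H₂}
    (hS : IsHS S) (hT : IsHS T) :
    Summable fun p : ℕ × ℕ => ‖mTerm u v S T p‖ := by
  refine Summable.of_nonneg_of_le (fun p => norm_nonneg _) (mTerm_norm_le u v S T) ?_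
  exact summable_mul_of_sq (fun p => norm_nonneg _) (fun p => norm_nonneg _)
    (sq_summable hu hS).1 (sq_summable hv hT).1

lemma mTerm_summable {u : ℕ → hsIdx H₁} {v : ℕ → hsIdx H₂} (hu : Function.Injective u)
    (hv : Function.Injective v) {S : H₁ →L[ℂ] H₁} {T : H₂ →L[ℂ] H₂}
    (hS : IsHS S) (hT : IsHS T) :
    Summable fun p : ℕ × ℕ => mTerm u v S T p :=
  (mTerm_summable_norm hu hv hS hT).of_norm

lemma mForm_bound {u : ℕ → hsIdx H₁} {v : ℕ → hsIdx H₂} (hu : Function.Injective u)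
    (hv : Function.Injective v) {S : H₁ →L[ℂ] H₁} {T : H₂ →L[ℂ] H₂}
    (hS : IsHS S) (hT : IsHS T) :
    ‖mForm u v S T‖ ≤ hsNorm S * hsNorm T := by
  have h0 : ‖mForm u v S T‖ ≤ ∑' p : ℕ × ℕ, ‖mTerm u v S T p‖ :=
    norm_tsum_le_tsum_norm (mTerm_summable_norm hu hv hS hT)
  have h1 : ∑' p : ℕ × ℕ, ‖mTerm u v S T p‖ ≤
      ∑' p : ℕ × ℕ, ‖(inner ℂ (hsBasis H₁ (u p.2)) (S (hsBasis H₁ (u p.1))) : ℂ)‖ *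
        ‖(inner ℂ (hsBasis H₂ (v p.2)) (T (hsBasis H₂ (v p.1))) : ℂ)‖ :=
    Summable.tsum_le_tsum (mTerm_norm_le u v S T) (mTerm_summable_norm hu hv hS hT)
      (summable_mul_of_sq (fun p => norm_nonneg _) (fun p => norm_nonneg _)
        (sq_summable hu hS).1 (sq_summable hv hT).1)
  have h2 := tsum_mul_le_sqrt (f := fun p : ℕ × ℕ =>
      ‖(inner ℂ (hsBasis H₁ (u p.2)) (S (hsBasis H₁ (u p.1))) : ℂ)‖)
    (g := fun p : ℕ × ℕ => ‖(inner ℂ (hsBasis H₂ (v p.2)) (T (hsBasis H₂ (v p.1))) : ℂ)‖)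
    (fun p => norm_nonneg _) (fun p => norm_nonneg _) (sq_summable hu hS).1 (sq_summable hv hT).1
  have h3 : Real.sqrt (∑' p : ℕ × ℕ,
      ‖(inner ℂ (hsBasis H₁ (u p.2)) (S (hsBasis H₁ (u p.1))) : ℂ)‖ ^ 2) ≤ hsNorm S := by
    have := Real.sqrt_le_sqrt (sq_summable hu hS).2
    rwa [Real.sqrt_sq (hsNorm_nonneg _)] at this
  have h4 : Real.sqrt (∑' p : ℕ × ℕ,
      ‖(inner ℂ (hsBasis H₂ (v p.2)) (T (hsBasis H₂ (v p.1))) : ℂ)‖ ^ 2) ≤ hsNorm T := by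
    have := Real.sqrt_le_sqrt (sq_summable hv hT).2
    rwa [Real.sqrt_sq (hsNorm_nonneg _)] at this
  have h5 : Real.sqrt (∑' p : ℕ × ℕ,
        ‖(inner ℂ (hsBasis H₁ (u p.2)) (S (hsBasis H₁ (u p.1))) : ℂ)‖ ^ 2) *
      Real.sqrt (∑' p : ℕ × ℕ,
        ‖(inner ℂ (hsBasis H₂ (v p.2)) (T (hsBasis H₂ (v p.1))) : ℂ)‖ ^ 2)
      ≤ hsNorm S * hsNorm T :=
    mul_le_mul h3 h4 (Real.sqrt_nonneg _) (le_trans (Real.sqrt_nonneg _) h3)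
  linarith

lemma mTerm_add_left (u : ℕ → hsIdx H₁) (v : ℕ → hsIdx H₂) (S S' : H₁ →L[ℂ] H₁)
    (T : H₂ →L[ℂ] H₂) (p : ℕ × ℕ) :
    mTerm u v (S + S') T p = mTerm u v S T p + mTerm u v S' T p := by
  simp only [mTerm, ContinuousLinearMap.add_apply, inner_add_right]; ring

lemma mTerm_smul_left (u : ℕ → hsIdx H₁) (v : ℕ → hsIdx H₂) (c : ℂ) (S : H₁ →L[ℂ] H₁)
    (T : H₂ →L[ℂ] H₂) (p : ℕ × ℕ) :
    mTerm u v (c • S) T p = c * mTerm u v S T p := by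
  simp only [mTerm, ContinuousLinearMap.smul_apply, inner_smul_right]; ring

lemma mTerm_add_right (u : ℕ → hsIdx H₁) (v : ℕ → hsIdx H₂) (S : H₁ →L[ℂ] H₁)
    (T T' : H₂ →L[ℂ] H₂) (p : ℕ × ℕ) :
    mTerm u v S (T + T') p = mTerm u v S T p + mTerm u v S T' p := by
  simp only [mTerm, ContinuousLinearMap.add_apply, inner_add_right]; ring

lemma mTerm_smul_right (u : ℕ → hsIdx H₁) (v : ℕ → hsIdx H₂) (c : ℂ) (S : H₁ →L[ℂ] H₁)
    (T : H₂ →L[ℂ] H₂) (p : ℕ × ℕ) :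
    mTerm u v S (c • T) p = c * mTerm u v S T p := by
  simp only [mTerm, ContinuousLinearMap.smul_apply, inner_smul_right]; ring

lemma mForm_rk (u : ℕ → hsIdx H₁) (v : ℕ → hsIdx H₂) (hu : Function.Injective u)
    (hv : Function.Injective v) (i j : ℕ) :
    mForm u v (rk (u j) (hsBasis H₁ (u i))) (rk (v j) (hsBasis H₂ (v i)))
      = if j ≤ i then 1 else 0 := by
  have horth1 := orthonormal_iff_ite.mp (hsBasis H₁).orthonormal
  have horth2 := orthonormal_iff_ite.mp (hsBasis H₂).orthonormal
  have e1 : ∀ p : ℕ × ℕ, p ≠ (j, i) →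
      mTerm u v (rk (u j) (hsBasis H₁ (u i))) (rk (v j) (hsBasis H₂ (v i))) p = 0 := by
    intro p hp
    rw [mTerm]
    by_cases h1 : p.1 = j
    · have h2 : p.2 ≠ i := fun h => hp (Prod.ext h1 h)
      have hne : u p.2 ≠ u i := fun h => h2 (hu h)
      rw [rk_apply_basis, if_pos (congrArg u h1.symm), horth1, if_neg hne]
      simp
    · have hne : u j ≠ u p.1 := fun h => h1 (hu h).symm
      rw [rk_apply_basis, if_neg hne]
      simp
  rw [mForm, tsum_eq_single (j, i) e1, mTerm]
  have hb1 : rk (u j) (hsBasis H₁ (u i)) (hsBasis H₁ (u j)) = hsBasis H₁ (u i) := by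
    rw [rk_apply_basis, if_pos rfl]
  have hb2 : rk (v j) (hsBasis H₂ (v i)) (hsBasis H₂ (v j)) = hsBasis H₂ (v i) := by
    rw [rk_apply_basis, if_pos rfl]
  simp only [hb1, hb2, horth1, horth2, if_pos rfl]
  simp

/-- If `H₁` and `H₂` are infinite-dimensional complex Hilbert spaces, then
there are a bounded bilinear form `m` on `S_2(H₁) × S_2(H₂)` and sequences `(S i)`, `(S' j)`
in the closed unit ball of `S_2(H₁)` and `(T i)`, `(T' j)` in the closed unit ball of
`S_2(H₂)` such that `lim_i lim_j m (Sᵢ S̃ⱼ) (Tᵢ T̃ⱼ) = 0` while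
`lim_j lim_i m (Sᵢ S̃ⱼ) (Tᵢ T̃ⱼ) = 1`; in particular `m` is not biregular. -/
theorem exists_not_biregular_of_infiniteDimensional
    (h₁ : ¬ FiniteDimensional ℂ H₁) (h₂ : ¬ FiniteDimensional ℂ H₂) :
    ∃ m : (H₁ →L[ℂ] H₁) → (H₂ →L[ℂ] H₂) → ℂ, IsHSBilinearForm m ∧
      ∃ (S S' : ℕ → H₁ →L[ℂ] H₁) (T T' : ℕ → H₂ →L[ℂ] H₂),
        (∀ i, IsHS (S i) ∧ hsNorm (S i) ≤ 1) ∧ (∀ j, IsHS (S' j) ∧ hsNorm (S' j) ≤ 1) ∧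
        (∀ i, IsHS (T i) ∧ hsNorm (T i) ≤ 1) ∧ (∀ j, IsHS (T' j) ∧ hsNorm (T' j) ≤ 1) ∧
        ∃ g h : ℕ → ℂ,
          (∀ i, Tendsto (fun j => m (S i * S' j) (T i * T' j)) atTop (𝓝 (g i))) ∧
          Tendsto g atTop (𝓝 0) ∧
          (∀ j, Tendsto (fun i => m (S i * S' j) (T i * T' j)) atTop (𝓝 (h j))) ∧
          Tendsto h atTop (𝓝 1) := by
  haveI := hsIdx_infinite h₁
  haveI := hsIdx_infinite h₂
  set u : ℕ ↪ hsIdx H₁ := Infinite.natEmbedding _ with hu_def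
  set v : ℕ ↪ hsIdx H₂ := Infinite.natEmbedding _ with hv_def
  have hu : Function.Injective (⇑u) := u.injective
  have hv : Function.Injective (⇑v) := v.injective
  refine ⟨mForm ⇑u ⇑v, ?_, ?_⟩
  · refine ⟨?_, ?_, ?_, ?_, ?_⟩
    · intro S S' T hS hS' hT
      rw [mForm, tsum_congr (fun p => mTerm_add_left ⇑u ⇑v S S' T p),
        Summable.tsum_add (mTerm_summable hu hv hS hT) (mTerm_summable hu hv hS' hT)]
      rfl
    · intro c S T hS hT
      rw [mForm, tsum_congr (fun p => mTerm_smul_left ⇑u ⇑v c S T p), tsum_mul_left]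
      rfl
    · intro S T T' hS hT hT'
      rw [mForm, tsum_congr (fun p => mTerm_add_right ⇑u ⇑v S T T' p),
        Summable.tsum_add (mTerm_summable hu hv hS hT) (mTerm_summable hu hv hS hT')]
      rfl
    · intro c S T hS hT
      rw [mForm, tsum_congr (fun p => mTerm_smul_right ⇑u ⇑v c S T p), tsum_mul_left]
      rfl
    · exact ⟨1, fun S T hS hT => by
        simpa using mForm_bound hu hv hS hT⟩
  · refine ⟨fun i => rk (u 0) (hsBasis H₁ (u i)), fun j => rk (u j) (hsBasis H₁ (u 0)),
      fun i => rk (v 0) (hsBasis H₂ (v i)), fun j => rk (v j) (hsBasis H₂ (v 0)),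
      ?_, ?_, ?_, ?_, ?_⟩
    · exact fun i => ⟨isHS_rk _ _, by
        rw [hsNorm_rk, (hsBasis H₁).orthonormal.1]⟩
    · exact fun j => ⟨isHS_rk _ _, by
        rw [hsNorm_rk, (hsBasis H₁).orthonormal.1]⟩
    · exact fun i => ⟨isHS_rk _ _, by
        rw [hsNorm_rk, (hsBasis H₂).orthonormal.1]⟩
    · exact fun j => ⟨isHS_rk _ _, by
        rw [hsNorm_rk, (hsBasis H₂).orthonormal.1]⟩
    · have hval : ∀ i j : ℕ,
          mForm ⇑u ⇑v (rk (u 0) (hsBasis H₁ (u i)) * rk (u j) (hsBasis H₁ (u 0)))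
            (rk (v 0) (hsBasis H₂ (v i)) * rk (v j) (hsBasis H₂ (v 0)))
          = if j ≤ i then 1 else 0 := by
        intro i j
        rw [ContinuousLinearMap.mul_def, ContinuousLinearMap.mul_def,
          rk_comp (u 0) (u j) (hsBasis H₁ (u i)), rk_comp (v 0) (v j) (hsBasis H₂ (v i)),
          mForm_rk ⇑u ⇑v hu hv i j]
      refine ⟨fun _ => 0, fun _ => 1, ?_, tendsto_const_nhds, ?_, tendsto_const_nhds⟩
      · intro i
        have heq : (fun j => mForm ⇑u ⇑v
            (rk (u 0) (hsBasis H₁ (u i)) * rk (u j) (hsBasis H₁ (u 0)))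
            (rk (v 0) (hsBasis H₂ (v i)) * rk (v j) (hsBasis H₂ (v 0))))
            = fun j => if j ≤ i then (1 : ℂ) else 0 := funext fun j => hval i j
        rw [heq]
        refine Tendsto.congr' ?_ (tendsto_const_nhds (x := (0:ℂ)))
        filter_upwards [eventually_ge_atTop (i + 1)] with j hj
        simp [show ¬ j ≤ i by omega]
      · intro j
        have heq : (fun i => mForm ⇑u ⇑v
            (rk (u 0) (hsBasis H₁ (u i)) * rk (u j) (hsBasis H₁ (u 0)))
            (rk (v 0) (hsBasis H₂ (v i)) * rk (v j) (hsBasis H₂ (v 0))))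
            = fun i => if j ≤ i then (1 : ℂ) else 0 := funext fun i => hval i j
        rw [heq]
        refine Tendsto.congr' ?_ (tendsto_const_nhds (x := (1:ℂ)))
        filter_upwards [eventually_ge_atTop j] with i hi
        simp [hi]
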